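/- Define a bracket on the complex vector space L with basis {e_1,h_1,f_1, e_2,h_2,f_2, x_0^1,…,x_m^1, x_0^2,…,x_m^2} by: [e_i,h_i]=−[h_i,e_i]=2e_i, [h_i,f_i]=−[f_i,h_i]=2f_i, [e_i,f_i]=−[f_i,e_i]=h_i for i=1,2; [x_k^i,h_1]=(m−2k)x_k^i, [x_k^i,f_1]=x_{k+1}^i (k<m), [x_k^i,e_1]=−k(m+1−k)x_{k−1}^i for i=1,2; [x_j^1,e_2]=x_j^2, [x_j^2,h_2]=x_j^2, [x_j^1,h_2]=−x_j^1, [x_j^2,f_2]=−x_j^1, all other products zero. Then L is a right Leibniz algebra (the Leibniz identity [x,[y,z]]=[[x,y],z]−[[x,z],y] holds). -/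

import Mathlib

set_option maxHeartbeats 4000000 in
/-- The multiplication table of Theorem 4.2 defines a genuine (right) Leibniz algebra:
on a `(2m+8)`-dimensional complex space with basis
`{e₁,h₁,f₁,e₂,h₂,f₂, x_0^1,…,x_m^1, x_0^2,…,x_m^2}` the given table satisfies the
Leibniz identity `[x,[y,z]] = [[x,y],z] - [[x,z],y]`. -/
theorem table_of_thm42_is_Leibniz
    (m : ℕ) (V : Type*) [AddCommGroup V] [Module ℂ V]
    (B : V →ₗ[ℂ] V →ₗ[ℂ] V)
    (e h f : Fin 2 → V) (X : Fin 2 → Fin (m + 1) → V)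
    -- the listed vectors form a basis of `V`
    (hindep : LinearIndependent ℂ
      (Sum.elim (fun p : Fin 2 × Fin 3 => ![e p.1, h p.1, f p.1] p.2)
        (fun p : Fin 2 × Fin (m + 1) => X p.1 p.2)))
    (hspan : Submodule.span ℂ
      (Set.range (Sum.elim (fun p : Fin 2 × Fin 3 => ![e p.1, h p.1, f p.1] p.2)
        (fun p : Fin 2 × Fin (m + 1) => X p.1 p.2))) = ⊤)
    -- two commuting copies of sl₂
    (hsl : ∀ i, B (e i) (h i) = (2 : ℂ) • e i ∧ B (h i) (e i) = -((2 : ℂ) • e i) ∧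
      B (h i) (f i) = (2 : ℂ) • f i ∧ B (f i) (h i) = -((2 : ℂ) • f i) ∧
      B (e i) (f i) = h i ∧ B (f i) (e i) = -(h i) ∧
      B (e i) (e i) = 0 ∧ B (f i) (f i) = 0 ∧ B (h i) (h i) = 0)
    (hcross : ∀ i j, i ≠ j →
      ∀ u ∈ ({e i, f i, h i} : Set V), ∀ v ∈ ({e j, f j, h j} : Set V), B u v = 0)
    -- the action of the first copy of sl₂ on the modules
    (hXh1 : ∀ i k, B (X i k) (h 0) = ((m : ℂ) - 2 * ((k : Fin (m+1)) : ℕ)) • X i k)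
    (hXf1 : ∀ (i) (k : Fin m), B (X i k.castSucc) (f 0) = X i k.succ)
    (hXf1last : ∀ i, B (X i (Fin.last m)) (f 0) = 0)
    (hXe10 : ∀ i, B (X i 0) (e 0) = 0)
    (hXe1 : ∀ (i) (k : Fin m), B (X i k.succ) (e 0) =
      (-(((k : ℕ) : ℂ) + 1) * ((m : ℂ) - (k : ℕ))) • X i k.castSucc)
    -- the action of the second copy of sl₂
    (hXe2a : ∀ k, B (X 0 k) (e 1) = X 1 k)
    (hXe2b : ∀ k, B (X 1 k) (e 1) = 0)
    (hXh2a : ∀ k, B (X 0 k) (h 1) = -(X 0 k))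
    (hXh2b : ∀ k, B (X 1 k) (h 1) = X 1 k)
    (hXf2a : ∀ k, B (X 0 k) (f 1) = 0)
    (hXf2b : ∀ k, B (X 1 k) (f 1) = -(X 0 k))
    -- all remaining products are zero
    (hleft : ∀ u ∈ ({e 0, f 0, h 0, e 1, f 1, h 1} : Set V), ∀ i k, B u (X i k) = 0)
    (hXX : ∀ i k j l, B (X i k) (X j l) = 0) :
    ∀ x y z : V, B x (B y z) = B (B x y) z - B (B x z) y := by
  classical
  obtain ⟨G, hG⟩ : ∃ G : (Fin 2 × Fin 3) ⊕ (Fin 2 × Fin (m+1)) → V,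
      G = Sum.elim (fun p : Fin 2 × Fin 3 => ![e p.1, h p.1, f p.1] p.2)
        (fun p : Fin 2 × Fin (m + 1) => X p.1 p.2) := ⟨_, rfl⟩
  have hspan' : Submodule.span ℂ (Set.range G) = ⊤ := by rw [hG]; exact hspan
  have hmem : ∀ v : V, v ∈ Submodule.span ℂ (Set.range G) := fun v => hspan'.symm ▸ Submodule.mem_top
  -- B kills every X on the right
  have hA : ∀ (w : V) (i : Fin 2) (k : Fin (m+1)), B w (X i k) = 0 := by
    intro w i k
    have hw := hmem w
    induction hw using Submodule.span_induction with
    | mem v hv =>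
        obtain ⟨p, rfl⟩ := hv
        rcases p with ⟨a, b⟩ | ⟨a, b⟩
        · simp only [hG, Sum.elim_inl]
          fin_cases a <;> fin_cases b <;>
            simp only [Matrix.cons_val_zero, Matrix.cons_val_one, Matrix.head_cons,
              Matrix.cons_val_two, Matrix.tail_cons] <;>
            exact hleft _ (by simp) i k
        · simp only [hG, Sum.elim_inr]; exact hXX a b i k
    | zero => simp
    | add a b _ _ iha ihb => simp [map_add, iha, ihb]
    | smul c a _ ih => simp [map_smul, ih]
  -- a ℕ-indexed version of the X family
  obtain ⟨xk, hxk_lt, hxk_ge⟩ : ∃ xk : Fin 2 → ℕ → V,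
      (∀ i (n : ℕ) (hn : n < m + 1), xk i n = X i ⟨n, hn⟩) ∧
      (∀ i (n : ℕ), m + 1 ≤ n → xk i n = 0) := by
    refine ⟨fun i n => if hn : n < m + 1 then X i ⟨n, hn⟩ else 0, ?_, ?_⟩
    · intro i n hn; exact dif_pos hn
    · intro i n hn; exact dif_neg (by omega : ¬ n < m + 1)
  have hXxk : ∀ i (k : Fin (m+1)), X i k = xk i (k : ℕ) := by
    intro i k; rw [hxk_lt i k k.isLt]
  have hA' : ∀ (w : V) i (n : ℕ), B w (xk i n) = 0 := by
    intro w i n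
    rcases lt_or_ge n (m+1) with hn | hn
    · rw [hxk_lt i n hn]; exact hA w i _
    · rw [hxk_ge i n hn]; exact map_zero _
  -- actions in ℕ-indexed form
  have hH' : ∀ i (n : ℕ), B (xk i n) (h 0) = ((m : ℂ) - 2 * n) • xk i n := by
    intro i n
    rcases lt_or_ge n (m+1) with hn | hn
    · rw [hxk_lt i n hn]; exact hXh1 i ⟨n, hn⟩
    · rw [hxk_ge i n hn]; simp
  have hF' : ∀ i (n : ℕ), B (xk i n) (f 0) = xk i (n + 1) := by
    intro i n
    rcases lt_or_ge n m with hn | hn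
    · rw [hxk_lt i n (by omega), hxk_lt i (n+1) (by omega)]
      exact hXf1 i ⟨n, hn⟩
    · rcases eq_or_lt_of_le hn with rfl | hn'
      · rw [hxk_lt i m (by omega), hxk_ge i (m+1) (by omega)]
        exact hXf1last i
      · rw [hxk_ge i n (by omega), hxk_ge i (n+1) (by omega)]; simp
  have hE' : ∀ i (n : ℕ),
      B (xk i n) (e 0) = (-(n : ℂ) * ((m : ℂ) + 1 - (n : ℂ))) • xk i (n - 1) := by
    intro i n
    match n with
    | 0 =>
      rw [hxk_lt i 0 (by omega)]
      simpa using hXe10 i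
    | (j+1) =>
      rcases lt_or_ge j m with hj | hj
      · rw [hxk_lt i (j+1) (by omega), hxk_lt i ((j+1)-1) (by omega)]
        have hx := hXe1 i ⟨j, hj⟩
        have h1 : X i (Fin.succ ⟨j, hj⟩) = X i ⟨j+1, by omega⟩ := rfl
        have h2 : X i (Fin.castSucc ⟨j, hj⟩) = X i ⟨(j+1)-1, by omega⟩ := rfl
        rw [h1, h2] at hx
        rw [hx]
        match_scalars
        push_cast
        ring
      · rw [hxk_ge i (j+1) (by omega)]
        rcases eq_or_lt_of_le hj with rfl | hj'
        · have hc : (-(((m:ℕ)+1 : ℕ) : ℂ) * ((m : ℂ) + 1 - (((m:ℕ)+1 : ℕ) : ℂ))) = 0 := by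
            push_cast; ring
          rw [map_zero, LinearMap.zero_apply, hc, zero_smul]
        · rw [hxk_ge i ((j+1)-1) (by omega)]
          simp
  have hE2a' : ∀ n : ℕ, B (xk 0 n) (e 1) = xk 1 n := by
    intro n
    rcases lt_or_ge n (m+1) with hn | hn
    · rw [hxk_lt 0 n hn, hxk_lt 1 n hn]; exact hXe2a _
    · rw [hxk_ge 0 n hn, hxk_ge 1 n hn]; simp
  have hE2b' : ∀ n : ℕ, B (xk 1 n) (e 1) = 0 := by
    intro n
    rcases lt_or_ge n (m+1) with hn | hn
    · rw [hxk_lt 1 n hn]; exact hXe2b _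
    · rw [hxk_ge 1 n hn]; simp
  have hH2a' : ∀ n : ℕ, B (xk 0 n) (h 1) = -(xk 0 n) := by
    intro n
    rcases lt_or_ge n (m+1) with hn | hn
    · rw [hxk_lt 0 n hn]; exact hXh2a _
    · rw [hxk_ge 0 n hn]; simp
  have hH2b' : ∀ n : ℕ, B (xk 1 n) (h 1) = xk 1 n := by
    intro n
    rcases lt_or_ge n (m+1) with hn | hn
    · rw [hxk_lt 1 n hn]; exact hXh2b _
    · rw [hxk_ge 1 n hn]; simp
  have hF2a' : ∀ n : ℕ, B (xk 0 n) (f 1) = 0 := by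
    intro n
    rcases lt_or_ge n (m+1) with hn | hn
    · rw [hxk_lt 0 n hn]; exact hXf2a _
    · rw [hxk_ge 0 n hn]; simp
  have hF2b' : ∀ n : ℕ, B (xk 1 n) (f 1) = -(xk 0 n) := by
    intro n
    rcases lt_or_ge n (m+1) with hn | hn
    · rw [hxk_lt 1 n hn, hxk_lt 0 n hn]; exact hXf2b _
    · rw [hxk_ge 1 n hn, hxk_ge 0 n hn]; simp
  -- the products inside the two sl₂ copies
  obtain ⟨p1eh, p1he, p1hf, p1fh, p1ef, p1fe, p1ee, p1ff, p1hh⟩ := hsl 0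
  obtain ⟨p2eh, p2he, p2hf, p2fh, p2ef, p2fe, p2ee, p2ff, p2hh⟩ := hsl 1
  have c01 := hcross 0 1 (by decide)
  have c10 := hcross 1 0 (by decide)
  have q1 : B (e 0) (e 1) = 0 := c01 _ (by simp) _ (by simp)
  have q2 : B (e 0) (f 1) = 0 := c01 _ (by simp) _ (by simp)
  have q3 : B (e 0) (h 1) = 0 := c01 _ (by simp) _ (by simp)
  have q4 : B (f 0) (e 1) = 0 := c01 _ (by simp) _ (by simp)
  have q5 : B (f 0) (f 1) = 0 := c01 _ (by simp) _ (by simp)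
  have q6 : B (f 0) (h 1) = 0 := c01 _ (by simp) _ (by simp)
  have q7 : B (h 0) (e 1) = 0 := c01 _ (by simp) _ (by simp)
  have q8 : B (h 0) (f 1) = 0 := c01 _ (by simp) _ (by simp)
  have q9 : B (h 0) (h 1) = 0 := c01 _ (by simp) _ (by simp)
  have q10 : B (e 1) (e 0) = 0 := c10 _ (by simp) _ (by simp)
  have q11 : B (e 1) (f 0) = 0 := c10 _ (by simp) _ (by simp)
  have q12 : B (e 1) (h 0) = 0 := c10 _ (by simp) _ (by simp)
  have q13 : B (f 1) (e 0) = 0 := c10 _ (by simp) _ (by simp)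
  have q14 : B (f 1) (f 0) = 0 := c10 _ (by simp) _ (by simp)
  have q15 : B (f 1) (h 0) = 0 := c10 _ (by simp) _ (by simp)
  have q16 : B (h 1) (e 0) = 0 := c10 _ (by simp) _ (by simp)
  have q17 : B (h 1) (f 0) = 0 := c10 _ (by simp) _ (by simp)
  have q18 : B (h 1) (h 0) = 0 := c10 _ (by simp) _ (by simp)
  -- the Leibniz identity on triples of generators
  have key : ∀ p q r, B (G p) (B (G q) (G r)) =
      B (B (G p) (G q)) (G r) - B (B (G p) (G r)) (G q) := by
    intro p q r
    rcases r with ⟨ir, jr⟩ | ⟨ir, kr⟩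
    · rcases q with ⟨iq, jq⟩ | ⟨iq, kq⟩
      · rcases p with ⟨ip, jp⟩ | ⟨ip, kp⟩
        · -- all three in the semisimple part
          simp only [hG, Sum.elim_inl]
          fin_cases ip <;> fin_cases jp <;> fin_cases iq <;> fin_cases jq <;>
            fin_cases ir <;> fin_cases jr <;>
            simp [p1eh, p1he, p1hf, p1fh, p1ef, p1fe, p1ee, p1ff, p1hh,
              p2eh, p2he, p2hf, p2fh, p2ef, p2fe, p2ee, p2ff, p2hh,
              q1, q2, q3, q4, q5, q6, q7, q8, q9, q10, q11, q12, q13, q14, q15, q16, q17, q18,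
              smul_smul, smul_neg, sub_zero, zero_sub, neg_neg, sub_self]
        · -- x = X, y and z in the semisimple part
          simp only [hG, Sum.elim_inl, Sum.elim_inr]
          rw [hXxk]
          generalize (kp : ℕ) = n
          fin_cases ip <;> fin_cases iq <;> fin_cases jq <;> fin_cases ir <;> fin_cases jr <;>
            rcases n with _ | n <;>
            simp [p1eh, p1he, p1hf, p1fh, p1ef, p1fe, p1ee, p1ff, p1hh,
              p2eh, p2he, p2hf, p2fh, p2ef, p2fe, p2ee, p2ff, p2hh,
              q1, q2, q3, q4, q5, q6, q7, q8, q9, q10, q11, q12, q13, q14, q15, q16, q17, q18,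
              hH', hF', hE', hE2a', hE2b', hH2a', hH2b', hF2a', hF2b',
              map_smul, LinearMap.smul_apply, map_neg, LinearMap.neg_apply,
              map_zero, LinearMap.zero_apply,
              Nat.add_sub_cancel, Nat.zero_sub, Nat.cast_zero, Nat.cast_succ,
              neg_zero, zero_mul, mul_zero, zero_smul, smul_zero, smul_neg, neg_neg,
              sub_zero, zero_sub, sub_self] <;>
            first
              | rfl
              | (match_scalars <;> push_cast <;> ring)
      · -- middle element is an X : everything vanishes
        simp only [hG, Sum.elim_inl, Sum.elim_inr]
        rw [hXxk]
        fin_cases iq <;> fin_cases ir <;> fin_cases jr <;>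
          simp [hH', hF', hE', hE2a', hE2b', hH2a', hH2b', hF2a', hF2b', hA']
    · -- last element is an X : everything vanishes
      simp only [hG, Sum.elim_inr]
      simp [hA]
  -- linear extension in the third argument
  have L3 : ∀ p q (z : V), B (G p) (B (G q) z) =
      B (B (G p) (G q)) z - B (B (G p) z) (G q) := by
    intro p q z
    have hz := hmem z
    induction hz using Submodule.span_induction with
    | mem w hw => obtain ⟨r, rfl⟩ := hw; exact key p q r
    | zero => simp
    | add a b _ _ iha ihb =>
        simp only [map_add, LinearMap.add_apply]
        rw [iha, ihb]; abel
    | smul c a _ ih =>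
        simp only [map_smul, LinearMap.smul_apply]
        rw [ih, smul_sub]
  -- linear extension in the second argument
  have L2 : ∀ p (y z : V), B (G p) (B y z) =
      B (B (G p) y) z - B (B (G p) z) y := by
    intro p y z
    have hy := hmem y
    induction hy using Submodule.span_induction with
    | mem w hw => obtain ⟨q, rfl⟩ := hw; exact L3 p q z
    | zero => simp
    | add a b _ _ iha ihb =>
        simp only [map_add, LinearMap.add_apply]
        rw [iha, ihb]; abel
    | smul c a _ ih =>
        simp only [map_smul, LinearMap.smul_apply]
        rw [ih, smul_sub]
  -- linear extension in the first argument
  intro x y z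
  have hx := hmem x
  induction hx using Submodule.span_induction with
  | mem w hw => obtain ⟨p, rfl⟩ := hw; exact L2 p y z
  | zero => simp
  | add a b _ _ iha ihb =>
      simp only [map_add, LinearMap.add_apply]
      rw [iha, ihb]; abel
  | smul c a _ ih =>
      simp only [map_smul, LinearMap.smul_apply]
      rw [ih, smul_sub]
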